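/- Let n ≥ 1 be an integer and let q', q be reals with 0 ≤ q' ≤ q ≤ 1. Let B be a binomial random variable with n trials and success probability q, and B' a binomial random variable with n trials and success probability q'. Then E[log₂(1 + B')] − E[log₂(1 + B)] ≤ n·(q − q')·log₂(1 − 1/(n+1)). -/

import Mathlib

open Finset Real

noncomputable def gfun (i : ℕ) : ℝ := Real.logb 2 (1 + (i:ℝ))

noncomputable def Ffun (n : ℕ) (p : ℝ) : ℝ :=
  ∑ i ∈ Finset.range (n+1), (n.choose i : ℝ) * p^i * (1-p)^(n-i) * gfun i

noncomputable def Dfun (n : ℕ) (p : ℝ) : ℝ :=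
  ∑ j ∈ Finset.range n,
    (n:ℝ) * ((n-1).choose j : ℝ) * p^j * (1-p)^(n-1-j) * (gfun (j+1) - gfun j)

lemma choose_id1 (n j : ℕ) (hn : 1 ≤ n) :
    n.choose (j+1) * (j+1) = n * (n-1).choose j := by
  obtain ⟨m, rfl⟩ := Nat.exists_eq_add_of_le hn
  simpa [Nat.add_comm] using (Nat.add_one_mul_choose_eq m j).symm

lemma choose_id2 (n j : ℕ) (hn : 1 ≤ n) :
    n.choose j * (n - j) = n * (n-1).choose j := by
  rw [← Nat.choose_succ_right_eq, choose_id1 n j hn]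

lemma hasDeriv_F (n : ℕ) (hn : 1 ≤ n) (p : ℝ) :
    HasDerivAt (Ffun n) (Dfun n p) p := by
  have key : ∀ i ∈ Finset.range (n+1),
      HasDerivAt (fun p : ℝ => (n.choose i : ℝ) * p^i * (1-p)^(n-i) * gfun i)
        (((n.choose i : ℝ) * ((i:ℝ) * p^(i-1)) * (1-p)^(n-i) +
          (n.choose i : ℝ) * p^i * (-(((n-i : ℕ):ℝ) * (1-p)^(n-i-1)))) * gfun i) p := by
    intro i _
    have h1 : HasDerivAt (fun p : ℝ => p^i) ((i:ℝ) * p^(i-1)) p := hasDerivAt_pow i p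
    have h2 : HasDerivAt (fun p : ℝ => (1-p)^(n-i))
        (-(((n-i : ℕ):ℝ) * (1-p)^(n-i-1))) p := by
      have hs : HasDerivAt (fun p : ℝ => 1 - p) (-1) p := by
        exact (hasDerivAt_id' p).const_sub 1
      have := (hasDerivAt_pow (n-i) (1-p)).comp p hs
      simpa [mul_comm, Function.comp_def] using this
    exact ((h1.const_mul (n.choose i : ℝ)).mul h2).mul_const (gfun i)
  have hsum := HasDerivAt.sum key
  have heq : (∑ i ∈ Finset.range (n+1),
      ((n.choose i : ℝ) * ((i:ℝ) * p^(i-1)) * (1-p)^(n-i) +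
        (n.choose i : ℝ) * p^i * (-(((n-i : ℕ):ℝ) * (1-p)^(n-i-1)))) * gfun i)
      = Dfun n p := by
    have hsplit : (∑ i ∈ Finset.range (n+1),
        ((n.choose i : ℝ) * ((i:ℝ) * p^(i-1)) * (1-p)^(n-i) +
          (n.choose i : ℝ) * p^i * (-(((n-i : ℕ):ℝ) * (1-p)^(n-i-1)))) * gfun i)
        = (∑ i ∈ Finset.range (n+1),
            (n.choose i : ℝ) * (i:ℝ) * p^(i-1) * (1-p)^(n-i) * gfun i)
          - (∑ i ∈ Finset.range (n+1),
            (n.choose i : ℝ) * ((n-i : ℕ):ℝ) * p^i * (1-p)^(n-i-1) * gfun i) := by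
      rw [← Finset.sum_sub_distrib]
      exact Finset.sum_congr rfl fun i _ => by ring
    have hA : (∑ i ∈ Finset.range (n+1),
        (n.choose i : ℝ) * (i:ℝ) * p^(i-1) * (1-p)^(n-i) * gfun i)
        = ∑ j ∈ Finset.range n,
          (n:ℝ) * ((n-1).choose j : ℝ) * p^j * (1-p)^(n-1-j) * gfun (j+1) := by
      rw [Finset.sum_range_succ']
      simp only [Nat.cast_zero, mul_zero, zero_mul, add_zero]
      refine Finset.sum_congr rfl fun j hj => ?_
      have hc : ((n.choose (j+1) : ℕ) : ℝ) * ((j+1 : ℕ) : ℝ)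
          = (n:ℝ) * ((n-1).choose j : ℝ) := by
        exact_mod_cast congrArg (Nat.cast (R := ℝ)) (choose_id1 n j hn)
      have he : n - (j+1) = n - 1 - j := by omega
      push_cast at hc ⊢
      rw [he]
      linear_combination (p^j * (1-p)^(n-1-j) * gfun (j+1)) * hc
    have hB : (∑ i ∈ Finset.range (n+1),
        (n.choose i : ℝ) * ((n-i : ℕ):ℝ) * p^i * (1-p)^(n-i-1) * gfun i)
        = ∑ j ∈ Finset.range n,
          (n:ℝ) * ((n-1).choose j : ℝ) * p^j * (1-p)^(n-1-j) * gfun j := by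
      rw [Finset.sum_range_succ]
      simp only [Nat.sub_self, Nat.cast_zero, mul_zero, zero_mul, add_zero]
      refine Finset.sum_congr rfl fun j hj => ?_
      have hc : ((n.choose j : ℕ) : ℝ) * ((n - j : ℕ) : ℝ)
          = (n:ℝ) * ((n-1).choose j : ℝ) := by
        exact_mod_cast congrArg (Nat.cast (R := ℝ)) (choose_id2 n j hn)
      have he : n - j - 1 = n - 1 - j := by omega
      rw [he]
      linear_combination (p^j * (1-p)^(n-1-j) * gfun j) * hc
    rw [hsplit, hA, hB, ← Finset.sum_sub_distrib]
    exact Finset.sum_congr rfl fun j _ => by ring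
  rw [heq] at hsum
  have hF : Ffun n = ∑ i ∈ Finset.range (n+1), fun p : ℝ => (n.choose i : ℝ) * p^i * (1-p)^(n-i) * gfun i := by
    ext x
    simp only [Ffun, Finset.sum_apply]
  rw [hF]
  exact hsum

lemma delta_lb (n j : ℕ) (hn : 1 ≤ n) (hj : j < n) :
    -(Real.logb 2 (1 - 1/((n:ℝ)+1))) ≤ gfun (j+1) - gfun j := by
  have hn0 : (0:ℝ) < n := by exact_mod_cast hn
  have hn1 : (0:ℝ) < (n:ℝ)+1 := by linarith
  have hj1 : (0:ℝ) < 1 + (j:ℝ) := by positivity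
  have hfrac : 1 - 1/((n:ℝ)+1) = (n:ℝ)/((n:ℝ)+1) := by field_simp; ring
  rw [hfrac, Real.logb_div (ne_of_gt hn0) (ne_of_gt hn1)]
  unfold gfun
  push_cast
  have key : Real.logb 2 (((n:ℝ)+1) * (1 + (j:ℝ))) ≤ Real.logb 2 ((1 + ((j:ℝ)+1)) * (n:ℝ)) := by
    apply Real.logb_le_logb_of_le (by norm_num) (by positivity)
    have hjn : (j:ℝ) + 1 ≤ (n:ℝ) := by exact_mod_cast hj
    nlinarith
  rw [Real.logb_mul (by positivity) (by positivity),
      Real.logb_mul (by positivity) (ne_of_gt hn0)] at key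
  linarith

lemma weights_sum (n : ℕ) (hn : 1 ≤ n) (p : ℝ) :
    ∑ j ∈ Finset.range n, ((n-1).choose j : ℝ) * p^j * (1-p)^(n-1-j) = 1 := by
  obtain ⟨m, rfl⟩ := Nat.exists_eq_add_of_le hn
  have := add_pow p (1-p) m
  simp only [Nat.add_comm 1 m, Nat.add_sub_cancel]
  calc ∑ j ∈ Finset.range (m+1), (m.choose j : ℝ) * p^j * (1-p)^(m-j)
      = ∑ j ∈ Finset.range (m+1), p^j * (1-p)^(m-j) * (m.choose j : ℝ) := by
        exact Finset.sum_congr rfl fun j _ => by ring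
    _ = (p + (1-p))^m := (add_pow p (1-p) m).symm
    _ = 1 := by norm_num

lemma D_lb (n : ℕ) (hn : 1 ≤ n) (p : ℝ) (hp0 : 0 ≤ p) (hp1 : p ≤ 1) :
    (n:ℝ) * (-(Real.logb 2 (1 - 1/((n:ℝ)+1)))) ≤ Dfun n p := by
  set c := -(Real.logb 2 (1 - 1/((n:ℝ)+1))) with hc
  have hstep : ∀ j ∈ Finset.range n,
      (n:ℝ) * (((n-1).choose j : ℝ) * p^j * (1-p)^(n-1-j)) * c
      ≤ (n:ℝ) * ((n-1).choose j : ℝ) * p^j * (1-p)^(n-1-j) * (gfun (j+1) - gfun j) := by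
    intro j hj
    have hw : (0:ℝ) ≤ (n:ℝ) * (((n-1).choose j : ℝ) * p^j * (1-p)^(n-1-j)) := by
      have : (0:ℝ) ≤ 1 - p := by linarith
      positivity
    have hΔ := delta_lb n j hn (Finset.mem_range.mp hj)
    calc (n:ℝ) * (((n-1).choose j : ℝ) * p^j * (1-p)^(n-1-j)) * c
        ≤ (n:ℝ) * (((n-1).choose j : ℝ) * p^j * (1-p)^(n-1-j)) * (gfun (j+1) - gfun j) :=
          mul_le_mul_of_nonneg_left hΔ hw
      _ = (n:ℝ) * ((n-1).choose j : ℝ) * p^j * (1-p)^(n-1-j) * (gfun (j+1) - gfun j) := by ring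
  have := Finset.sum_le_sum hstep
  have hws : ∑ j ∈ Finset.range n,
      (n:ℝ) * (((n-1).choose j : ℝ) * p^j * (1-p)^(n-1-j)) * c = (n:ℝ) * c := by
    rw [← Finset.sum_mul, ← Finset.mul_sum, weights_sum n hn p, mul_one]
  calc (n:ℝ) * c = ∑ j ∈ Finset.range n,
        (n:ℝ) * (((n-1).choose j : ℝ) * p^j * (1-p)^(n-1-j)) * c := hws.symm
    _ ≤ Dfun n p := this

/-- For `n ≥ 1` and `0 ≤ q' ≤ q ≤ 1`, if `B ~ Bin(n,q)` and
`B' ~ Bin(n,q')`, then `E[log₂(1+B')] - E[log₂(1+B)] ≤ n(q-q')·log₂(1 - 1/(n+1))`. -/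
theorem stmt_12 (n : ℕ) (hn : 1 ≤ n) (q' q : ℝ)
    (h0 : 0 ≤ q') (h1 : q' ≤ q) (h2 : q ≤ 1) :
    (∑ i ∈ Finset.range (n+1),
        (n.choose i : ℝ) * q'^i * (1-q')^(n-i) * Real.logb 2 (1+(i:ℝ)))
    - (∑ i ∈ Finset.range (n+1),
        (n.choose i : ℝ) * q^i * (1-q)^(n-i) * Real.logb 2 (1+(i:ℝ)))
    ≤ (n:ℝ) * (q - q') * Real.logb 2 (1 - 1/((n:ℝ)+1)) := by
  show Ffun n q' - Ffun n q ≤ _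
  rcases eq_or_lt_of_le h1 with heq | hlt
  · subst heq; simp
  · have hmvt := exists_hasDerivAt_eq_slope (Ffun n) (Dfun n) hlt
      ((fun x _ => (hasDeriv_F n hn x).continuousAt.continuousWithinAt))
      (fun x _ => hasDeriv_F n hn x)
    obtain ⟨x, hx, hslope⟩ := hmvt
    have hx0 : 0 ≤ x := le_of_lt (lt_of_le_of_lt h0 hx.1)
    have hx1 : x ≤ 1 := le_of_lt (lt_of_lt_of_le hx.2 h2)
    have hD := D_lb n hn x hx0 hx1
    have hqq : 0 < q - q' := by linarith
    have hFF : Ffun n q - Ffun n q' = (q - q') * Dfun n x := by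
      rw [hslope]; field_simp
    nlinarith [hFF, hD, hqq]
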